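/- For all f, g ∈ {St, Te} and ⋈ ∈ {=, <, >} there is an MSO formula φ(x, y) over ipomsets such that for every interval ipomset P and all events x, y of P, P ⊨ φ(x, y) if and only if f(x) ⋈ g(y) holds for the indices in the sparse step decomposition of P; moreover there are MSO formulas defining min(f(x)) (f(x) = 1, the first step) and max(f(x)) (f(x) = n, the last step). -/

import Mathlib

set_option autoImplicit false

/-! ## Ipomsets (pomsets with interfaces) over an alphabet Λ, with events drawn from ℕ -/

structure Ipomset (Λ : Type) : Type where
  E : Finset ℕ
  lt : ℕ → ℕ → Prop
  evord : ℕ → ℕ → Prop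
  S : Finset ℕ
  T : Finset ℕ
  lab : ℕ → Λ
  S_sub : S ⊆ E
  T_sub : T ⊆ E
  lt_dom : ∀ a b, lt a b → a ∈ E ∧ b ∈ E
  evord_dom : ∀ a b, evord a b → a ∈ E ∧ b ∈ E
  lt_irrefl : ∀ e, ¬ lt e e
  lt_trans : ∀ a b c, lt a b → lt b c → lt a c
  evord_irrefl : ∀ e, ¬ evord e e
  evord_asymm : ∀ a b, evord a b → ¬ evord b a
  lt_evord : ∀ a b, lt a b → ¬ evord a b ∧ ¬ evord b a
  total : ∀ e ∈ E, ∀ e' ∈ E, e ≠ e' → lt e e' ∨ lt e' e ∨ evord e e' ∨ evord e' e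
  S_min : ∀ e ∈ S, ∀ e', ¬ lt e' e
  T_max : ∀ e ∈ T, ∀ e', ¬ lt e e'

namespace Ipomset

variable {Λ : Type}

/-- An ipomset is interval if its precedence order admits an interval representation. -/
def Interval (P : Ipomset Λ) : Prop :=
  ∃ f g : ℕ → ℝ, (∀ e ∈ P.E, f e ≤ g e) ∧
    (∀ e₁ ∈ P.E, ∀ e₂ ∈ P.E, (P.lt e₁ e₂ ↔ g e₁ < f e₂))

/-- Discrete: empty precedence order. -/
def Discrete (P : Ipomset Λ) : Prop := ∀ a b, ¬ P.lt a b

/-- A starter is a discrete ipomset all of whose events are targets. -/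
def IsStarter (P : Ipomset Λ) : Prop := P.Discrete ∧ P.T = P.E

/-- A terminator is a discrete ipomset all of whose events are sources. -/
def IsTerminator (P : Ipomset Λ) : Prop := P.Discrete ∧ P.S = P.E

/-- An identity is both a starter and a terminator. -/
def IsId (P : Ipomset Λ) : Prop := P.IsStarter ∧ P.IsTerminator

/-- The width of an ipomset: the cardinality of a largest `<`-antichain. -/
noncomputable def width (P : Ipomset Λ) : ℕ :=
  sSup {n | ∃ A : Finset ℕ, A ⊆ P.E ∧ (∀ a ∈ A, ∀ b ∈ A, ¬ P.lt a b) ∧ A.card = n}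

/-- `P.Subsumes Q` means `P ⊑ Q` : `Q` subsumes `P`. -/
def Subsumes (P Q : Ipomset Λ) : Prop :=
  ∃ f : ℕ → ℕ, Set.BijOn f ↑P.E ↑Q.E ∧
    (∀ e ∈ P.E, (e ∈ P.S ↔ f e ∈ Q.S)) ∧
    (∀ e ∈ P.E, (e ∈ P.T ↔ f e ∈ Q.T)) ∧
    (∀ e ∈ P.E, Q.lab (f e) = P.lab e) ∧
    (∀ e₁ ∈ P.E, ∀ e₂ ∈ P.E, Q.lt (f e₁) (f e₂) → P.lt e₁ e₂) ∧
    (∀ e₁ ∈ P.E, ∀ e₂ ∈ P.E, P.evord e₁ e₂ → Q.evord (f e₁) (f e₂))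

/-- `f` is an isomorphism of ipomsets from `P` to `Q`. -/
def IsIso (P Q : Ipomset Λ) (f : ℕ → ℕ) : Prop :=
  Set.BijOn f ↑P.E ↑Q.E ∧
    (∀ e ∈ P.E, (e ∈ P.S ↔ f e ∈ Q.S)) ∧
    (∀ e ∈ P.E, (e ∈ P.T ↔ f e ∈ Q.T)) ∧
    (∀ e ∈ P.E, Q.lab (f e) = P.lab e) ∧
    (∀ e₁ ∈ P.E, ∀ e₂ ∈ P.E, (P.lt e₁ e₂ ↔ Q.lt (f e₁) (f e₂))) ∧
    (∀ e₁ ∈ P.E, ∀ e₂ ∈ P.E, (P.evord e₁ e₂ ↔ Q.evord (f e₁) (f e₂)))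

def Isomorphic (P Q : Ipomset Λ) : Prop := ∃ f, IsIso P Q f

end Ipomset

/-- Subsumption closure of a set of ipomsets. -/
def downc {Λ : Type} (L : Set (Ipomset Λ)) : Set (Ipomset Λ) :=
  {P | ∃ Q ∈ L, P.Subsumes Q}

/-! ## Gluing composition -/

/-- The base relation whose transitive closure is the precedence of a gluing `P * Q`. -/
def glueBase {Λ : Type} (P Q : Ipomset Λ) : ℕ → ℕ → Prop := fun a b =>
  P.lt a b ∨ Q.lt a b ∨ (a ∈ P.E ∧ a ∉ P.T ∧ b ∈ Q.E ∧ b ∉ Q.S)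

/-- `IsGluing P Q R` : the gluing `P * Q` is defined and equals `R`
(events of the target interface of `P` are literally identified with those of the
source interface of `Q`). -/
structure IsGluing {Λ : Type} (P Q R : Ipomset Λ) : Prop where
  match_TS : P.T = Q.S
  inter : ∀ e, e ∈ P.E → e ∈ Q.E → e ∈ P.T
  evord_agree : ∀ a ∈ P.T, ∀ b ∈ P.T, (P.evord a b ↔ Q.evord a b)
  lab_agree : ∀ e ∈ P.T, P.lab e = Q.lab e
  E_eq : R.E = P.E ∪ Q.E
  S_eq : R.S = P.S
  T_eq : R.T = Q.T
  lab_P : ∀ e ∈ P.E, R.lab e = P.lab e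
  lab_Q : ∀ e ∈ Q.E, R.lab e = Q.lab e
  evord_eq : ∀ a b, (R.evord a b ↔ P.evord a b ∨ Q.evord a b)
  lt_eq : ∀ a b, (R.lt a b ↔ Relation.TransGen (glueBase P Q) a b)

/-- `IsGluingList [P₁, …, Pₙ] P` : the iterated gluing `P₁ * ⋯ * Pₙ` is defined and equals `P`. -/
inductive IsGluingList {Λ : Type} : List (Ipomset Λ) → Ipomset Λ → Prop
  | single (P : Ipomset Λ) : IsGluingList [P] P
  | cons {P Q R : Ipomset Λ} {l : List (Ipomset Λ)} :
      IsGluingList l Q → IsGluing P Q R → IsGluingList (P :: l) R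

/-! ## Step decompositions -/

/-- A step decomposition of `P`: a presentation of `P` as a gluing of starters and
terminators. -/
def IsStepDecomp {Λ : Type} (l : List (Ipomset Λ)) (P : Ipomset Λ) : Prop :=
  l ≠ [] ∧ (∀ Q ∈ l, Q.IsStarter ∨ Q.IsTerminator) ∧ IsGluingList l P

/-- Starters and terminators alternate along the list. -/
def Alternating {Λ : Type} (l : List (Ipomset Λ)) : Prop :=
  List.Chain'
    (fun A B => ¬(A.IsStarter ∧ B.IsStarter) ∧ ¬(A.IsTerminator ∧ B.IsTerminator)) l

def IsSparseDecomp {Λ : Type} (l : List (Ipomset Λ)) (P : Ipomset Λ) : Prop :=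
  IsStepDecomp l P ∧ Alternating l

/-! ## Discrete steps as letters (for words over Ω) -/

/-- A letter denoting a starter (`isUp = true`) or terminator (`isUp = false`) with
conclist `U` (a list of labels, in event order) which starts/terminates the events at
the positions in `A`. -/
structure StepLetter (Λ : Type) : Type where
  U : List Λ
  A : Finset ℕ
  isUp : Bool

/-- The letter is well-formed (the started/terminated events are positions of `U`). -/
def ValidLetter {Λ : Type} (s : StepLetter Λ) : Prop := ∀ a ∈ s.A, a < s.U.length

/-- The letter is a well-formed element of `Ω_{≤ k}`. -/
def ValidLetterLe {Λ : Type} (k : ℕ) (s : StepLetter Λ) : Prop :=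
  ValidLetter s ∧ s.U.length ≤ k

/-- `g` enumerates the set `V` of events of `P` as the conclist `U` (in event order,
with matching labels). -/
def ConclistOf {Λ : Type} (P : Ipomset Λ) (V : Set ℕ) (U : List Λ) (g : ℕ → ℕ) : Prop :=
  Set.BijOn g (Set.Iio U.length) V ∧
    (∀ i : Fin U.length, P.lab (g i.1) = U.get i) ∧
    (∀ i j : ℕ, i < j → j < U.length → P.evord (g i) (g j))

/-- The discrete ipomset `D` realises the letter `s`. -/
def LetterMatches {Λ : Type} (s : StepLetter Λ) (D : Ipomset Λ) : Prop :=
  (if s.isUp then D.IsStarter else D.IsTerminator) ∧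
  ∃ g : ℕ → ℕ, ConclistOf D ↑D.E s.U g ∧
    ∀ i < s.U.length, (i ∈ s.A ↔ g i ∉ (if s.isUp then D.S else D.T))

/-- The word `w` of letters glues to the ipomset `P`. -/
def WordMatches {Λ : Type} (w : List (StepLetter Λ)) (P : Ipomset Λ) : Prop :=
  ∃ l : List (Ipomset Λ), List.Forall₂ LetterMatches w l ∧ IsGluingList l P

/-! ## Higher-dimensional automata -/

/-- Remove from the list `U` the entries at positions in `A`. -/
def removeIdx {Λ : Type} (U : List Λ) (A : Finset ℕ) : List Λ :=
  (List.range U.length).filterMap (fun i => if i ∈ A then none else U[i]?)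

/-- Positions of the elements of `A` after the elements at positions in `B` are removed. -/
def reindex (B A : Finset ℕ) : Finset ℕ :=
  A.image (fun a => a - (B.filter (· < a)).card)

/-- A higher-dimensional automaton: a finite precubical set (cells with conclists of
active events and lower/upper face maps, `face false` = δ⁰ and `face true` = δ¹)
with start and accept cells. -/
structure HDA (Λ : Type) : Type 1 where
  Cell : Type
  fin : Fintype Cell
  ev : Cell → List Λ
  face : Bool → Finset ℕ → Cell → Cell
  face_ev : ∀ ν A q, (∀ a ∈ A, a < (ev q).length) →
      ev (face ν A q) = removeIdx (ev q) A
  face_comm : ∀ ν μ A B q, (∀ a ∈ A, a < (ev q).length) → (∀ b ∈ B, b < (ev q).length) →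
      Disjoint A B →
      face ν (reindex B A) (face μ B q) = face μ (reindex A B) (face ν A q)
  start : Set Cell
  accept : Set Cell

namespace HDA

variable {Λ : Type}

/-- Paths in an HDA, together with the word of starter/terminator letters they induce
(a single cell contributes its identity letter; an upstep from `δ⁰_A(q)` to `q`
contributes the starter on `ev q` starting `A`; a downstep from `q` to `δ¹_A(q)`
contributes the terminator on `ev q` terminating `A`). -/
inductive Path (H : HDA Λ) : H.Cell → H.Cell → List (StepLetter Λ) → Prop
  | nil (q : H.Cell) : Path H q q [⟨H.ev q, ∅, true⟩]
  | up {p : H.Cell} {w : List (StepLetter Λ)} (r : H.Cell) (A : Finset ℕ)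
      (hA : ∀ a ∈ A, a < (H.ev r).length) :
      Path H r p w → Path H (H.face false A r) p (⟨H.ev r, A, true⟩ :: w)
  | down {p : H.Cell} {w : List (StepLetter Λ)} (q : H.Cell) (A : Finset ℕ)
      (hA : ∀ a ∈ A, a < (H.ev q).length) :
      Path H (H.face true A q) p w → Path H q p (⟨H.ev q, A, false⟩ :: w)

/-- The language of an HDA: all ipomsets arising as gluings of the words of letters of
accepting paths. -/
def Lang (H : HDA Λ) : Set (Ipomset Λ) :=
  {P | ∃ q p w, q ∈ H.start ∧ p ∈ H.accept ∧ Path H q p w ∧ WordMatches w P}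

/-- The dimension of an HDA. -/
noncomputable def dim (H : HDA Λ) : ℕ :=
  letI := H.fin
  Finset.univ.sup (fun q => (H.ev q).length)

/-- An upstep of an HDA: `(δ⁰_A(q), ↗A, q)`. -/
structure UpStep (H : HDA Λ) : Type where
  cell : H.Cell
  A : Finset ℕ
  valid : ∀ a ∈ A, a < (H.ev cell).length

def UpStep.src {H : HDA Λ} (u : H.UpStep) : H.Cell := H.face false u.A u.cell
def UpStep.tgt {H : HDA Λ} (u : H.UpStep) : H.Cell := u.cell

/-- A downstep of an HDA: `(q, ↘A, δ¹_A(q))`. -/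
structure DownStep (H : HDA Λ) : Type where
  cell : H.Cell
  A : Finset ℕ
  valid : ∀ a ∈ A, a < (H.ev cell).length

def DownStep.src {H : HDA Λ} (d : H.DownStep) : H.Cell := d.cell
def DownStep.tgt {H : HDA Λ} (d : H.DownStep) : H.Cell := H.face true d.A d.cell

end HDA

/-- A set of ipomsets is regular if it is the language of a finite HDA. -/
def Regular {Λ : Type} (L : Set (Ipomset Λ)) : Prop := ∃ H : HDA Λ, HDA.Lang H = L

/-! ## Rational languages -/

/-- Rational languages: generated from ∅, {id_∅} and discrete ipomsets by union,
gluing composition and Kleene plus, each operation followed by closure under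
subsumption. -/
inductive Rational {Λ : Type} : Set (Ipomset Λ) → Prop
  | empty : Rational ∅
  | emptyId : Rational {P : Ipomset Λ | P.E = ∅}
  | single (D : Ipomset Λ) (hD : D.Discrete) :
      Rational (downc {P | Ipomset.Isomorphic P D})
  | union {L₁ L₂ : Set (Ipomset Λ)} : Rational L₁ → Rational L₂ →
      Rational (downc (L₁ ∪ L₂))
  | glue {L₁ L₂ : Set (Ipomset Λ)} : Rational L₁ → Rational L₂ →
      Rational (downc {R | ∃ P ∈ L₁, ∃ Q ∈ L₂, IsGluing P Q R})
  | plus {L : Set (Ipomset Λ)} : Rational L →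
      Rational (downc {R | ∃ l : List (Ipomset Λ), l ≠ [] ∧ (∀ Q ∈ l, Q ∈ L) ∧ IsGluingList l R})

/-! ## MSO over ipomsets -/

/-- MSO formulas over the signature `{<, ⇝, (a)_{a ∈ Λ}, s, t}`; first- and second-order
variables are indexed by ℕ. -/
inductive MSO (Λ : Type) : Type
  | lt : ℕ → ℕ → MSO Λ
  | ev : ℕ → ℕ → MSO Λ
  | lab : Λ → ℕ → MSO Λ
  | src : ℕ → MSO Λ
  | tgt : ℕ → MSO Λ
  | mem : ℕ → ℕ → MSO Λ
  | not : MSO Λ → MSO Λ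
  | and : MSO Λ → MSO Λ → MSO Λ
  | exFO : ℕ → MSO Λ → MSO Λ
  | exSO : ℕ → MSO Λ → MSO Λ

namespace MSO

variable {Λ : Type}

/-- Satisfaction of an MSO formula in an ipomset, under first- and second-order
valuations. -/
def Sat (P : Ipomset Λ) : MSO Λ → (ℕ → ℕ) → (ℕ → Set ℕ) → Prop
  | .lt x y, ν, _ => P.lt (ν x) (ν y)
  | .ev x y, ν, _ => P.evord (ν x) (ν y)
  | .lab a x, ν, _ => ν x ∈ P.E ∧ P.lab (ν x) = a
  | .src x, ν, _ => ν x ∈ P.S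
  | .tgt x, ν, _ => ν x ∈ P.T
  | .mem x X, ν, μ => ν x ∈ μ X
  | .not φ, ν, μ => ¬ Sat P φ ν μ
  | .and φ ψ, ν, μ => Sat P φ ν μ ∧ Sat P ψ ν μ
  | .exFO x φ, ν, μ => ∃ e ∈ P.E, Sat P φ (Function.update ν x e) μ
  | .exSO X φ, ν, μ => ∃ A : Set ℕ, A ⊆ ↑P.E ∧ Sat P φ ν (Function.update μ X A)

/-- Free first-order variables. -/
def fv1 : MSO Λ → Finset ℕ
  | .lt x y => {x, y}
  | .ev x y => {x, y}
  | .lab _ x => {x}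
  | .src x => {x}
  | .tgt x => {x}
  | .mem x _ => {x}
  | .not φ => fv1 φ
  | .and φ ψ => fv1 φ ∪ fv1 ψ
  | .exFO x φ => fv1 φ \ {x}
  | .exSO _ φ => fv1 φ

/-- Free second-order variables. -/
def fv2 : MSO Λ → Finset ℕ
  | .mem _ X => {X}
  | .not φ => fv2 φ
  | .and φ ψ => fv2 φ ∪ fv2 ψ
  | .exFO _ φ => fv2 φ
  | .exSO X φ => fv2 φ \ {X}
  | _ => ∅

/-- A sentence: a formula with no free variables. -/
def Closed (φ : MSO Λ) : Prop := φ.fv1 = ∅ ∧ φ.fv2 = ∅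

/-- Satisfaction of a sentence. -/
def Models (P : Ipomset Λ) (φ : MSO Λ) : Prop :=
  Sat P φ (fun _ => 0) (fun _ => ∅)

end MSO

/-- A set of interval ipomsets is MSO-definable if it is the set of interval ipomsets
satisfying some MSO sentence. -/
def MSODefinable {Λ : Type} (L : Set (Ipomset Λ)) : Prop :=
  ∃ φ : MSO Λ, φ.Closed ∧ L = {P | P.Interval ∧ MSO.Models P φ}

/-! ## MSO over words -/

/-- MSO formulas over words on the alphabet `Γ`. -/
inductive WMSO (Γ : Type) : Type
  | letter : Γ → ℕ → WMSO Γ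
  | lt : ℕ → ℕ → WMSO Γ
  | mem : ℕ → ℕ → WMSO Γ
  | not : WMSO Γ → WMSO Γ
  | and : WMSO Γ → WMSO Γ → WMSO Γ
  | exFO : ℕ → WMSO Γ → WMSO Γ
  | exSO : ℕ → WMSO Γ → WMSO Γ

namespace WMSO

variable {Γ : Type}

/-- Satisfaction of a word MSO formula in a word `w : List Γ`. -/
def Sat (w : List Γ) : WMSO Γ → (ℕ → ℕ) → (ℕ → Set ℕ) → Prop
  | .letter a x, ν, _ => w[ν x]? = some a
  | .lt x y, ν, _ => ν x < ν y
  | .mem x X, ν, μ => ν x ∈ μ X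
  | .not φ, ν, μ => ¬ Sat w φ ν μ
  | .and φ ψ, ν, μ => Sat w φ ν μ ∧ Sat w ψ ν μ
  | .exFO x φ, ν, μ => ∃ i < w.length, Sat w φ (Function.update ν x i) μ
  | .exSO X φ, ν, μ => ∃ A : Set ℕ, A ⊆ Set.Iio w.length ∧ Sat w φ ν (Function.update μ X A)

def fv1 : WMSO Γ → Finset ℕ
  | .letter _ x => {x}
  | .lt x y => {x, y}
  | .mem x _ => {x}
  | .not φ => fv1 φ
  | .and φ ψ => fv1 φ ∪ fv1 ψ
  | .exFO x φ => fv1 φ \ {x}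
  | .exSO _ φ => fv1 φ

def fv2 : WMSO Γ → Finset ℕ
  | .mem _ X => {X}
  | .not φ => fv2 φ
  | .and φ ψ => fv2 φ ∪ fv2 ψ
  | .exFO _ φ => fv2 φ
  | .exSO X φ => fv2 φ \ {X}
  | _ => ∅

def Closed (φ : WMSO Γ) : Prop := φ.fv1 = ∅ ∧ φ.fv2 = ∅

def Models (w : List Γ) (φ : WMSO Γ) : Prop :=
  Sat w φ (fun _ => 0) (fun _ => ∅)

end WMSO

/-! ## Step indices in a step decomposition -/

/-- The (1-indexed) step at which event `e` is started in the decomposition `l` of `P`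
(`⊥ = −∞` for source events). -/
noncomputable def StIdx {Λ : Type} (P : Ipomset Λ) (l : List (Ipomset Λ)) (e : ℕ) : EReal :=
  if e ∈ P.S then ⊥
  else sInf {x : EReal | ∃ ℓ : Fin l.length, e ∈ (l.get ℓ).E ∧ x = ((ℓ : ℕ) : EReal) + 1}

/-- The (1-indexed) step at which event `e` is terminated in the decomposition `l` of `P`
(`⊤ = +∞` for target events). -/
noncomputable def TeIdx {Λ : Type} (P : Ipomset Λ) (l : List (Ipomset Λ)) (e : ℕ) : EReal :=
  if e ∈ P.T then ⊤
  else sSup {x : EReal | ∃ ℓ : Fin l.length, e ∈ (l.get ℓ).E ∧ x = ((ℓ : ℕ) : EReal) + 1}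

/-- Select `St` (`true`) or `Te` (`false`). -/
noncomputable def selIdx {Λ : Type} (P : Ipomset Λ) (l : List (Ipomset Λ)) (f : Bool)
    (e : ℕ) : EReal :=
  if f then StIdx P l e else TeIdx P l e

/-! ### Auxiliary development for Statement 13 -/

namespace Step13Aux

open Ipomset

variable {Λ : Type}

lemma discrete_of_sot {Q : Ipomset Λ} (h : Q.IsStarter ∨ Q.IsTerminator) : Q.Discrete :=
  h.elim And.left And.left

lemma glist_ne_nil {l : List (Ipomset Λ)} {P : Ipomset Λ} (h : IsGluingList l P) : l ≠ [] := by
  cases h <;> simp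

lemma glist_length_pos {l : List (Ipomset Λ)} {P : Ipomset Λ} (h : IsGluingList l P) :
    0 < l.length := List.length_pos_iff.mpr (glist_ne_nil h)

lemma glist_E {l : List (Ipomset Λ)} {P : Ipomset Λ} (h : IsGluingList l P) (e : ℕ) :
    e ∈ P.E ↔ ∃ i : Fin l.length, e ∈ (l.get i).E := by
  induction h with
  | single P =>
    constructor
    · intro he; exact ⟨⟨0, by simp⟩, he⟩
    · rintro ⟨i, hi⟩
      have h0 : (i : ℕ) = 0 := by have := i.isLt; simp only [List.length_singleton] at this; omega
      have h1 : i = ⟨0, by simp⟩ := Fin.ext (by simp [h0])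
      subst h1; exact hi
  | cons hgl hglue ih =>
    rename_i P₀ Q R ls
    rw [hglue.E_eq]
    simp only [Finset.mem_union]
    rw [ih]
    constructor
    · rintro (h0 | ⟨i, hi⟩)
      · exact ⟨⟨0, Nat.succ_pos _⟩, h0⟩
      · exact ⟨i.succ, hi⟩
    · rintro ⟨⟨i, hi⟩, hmem⟩
      cases i with
      | zero => exact Or.inl hmem
      | succ k => exact Or.inr ⟨⟨k, Nat.succ_lt_succ_iff.mp hi⟩, hmem⟩

lemma glist_S {l : List (Ipomset Λ)} {P : Ipomset Λ} (h : IsGluingList l P)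
    (h0 : 0 < l.length) : P.S = (l.get ⟨0, h0⟩).S := by
  cases h with
  | single P => rfl
  | cons hgl hglue => exact hglue.S_eq

lemma glist_T {l : List (Ipomset Λ)} {P : Ipomset Λ} (h : IsGluingList l P) :
    P.T = (l.get ⟨l.length - 1, by have := glist_length_pos h; omega⟩).T := by
  induction h with
  | single P => rfl
  | cons hgl hglue ih =>
    rename_i P₀ Q R ls
    have hpos : 0 < ls.length := glist_length_pos hgl
    have : (P₀ :: ls).get ⟨(P₀ :: ls).length - 1, by simp⟩ =
        ls.get ⟨ls.length - 1, by omega⟩ := by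
      have h1 : (P₀ :: ls).length - 1 = (ls.length - 1) + 1 := by
        simp only [List.length_cons]; omega
      simp only [List.get_cons_succ, h1]
    rw [this, hglue.T_eq, ih]

lemma glist_TS {l : List (Ipomset Λ)} {P : Ipomset Λ} (h : IsGluingList l P) :
    ∀ i (hi : i + 1 < l.length),
      (l.get ⟨i, by omega⟩).T = (l.get ⟨i + 1, hi⟩).S := by
  induction h with
  | single P => intro i hi; simp at hi
  | cons hgl hglue ih =>
    rename_i P₀ Q R ls
    intro i hi
    cases i with
    | zero =>
      have hpos : 0 < ls.length := by simpa using hi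
      have h1 : ((P₀ :: ls).get ⟨1, hi⟩) = ls.get ⟨0, hpos⟩ := rfl
      have h0 : ((P₀ :: ls).get ⟨0, by omega⟩) = P₀ := rfl
      rw [h0, h1, hglue.match_TS, glist_S hgl hpos]
    | succ k =>
      have hk : k + 1 < ls.length := by simpa using hi
      exact ih k hk

lemma glist_chainT {l : List (Ipomset Λ)} {P : Ipomset Λ} (h : IsGluingList l P) :
    ∀ i j (hij : i < j) (hj : j < l.length) e,
      e ∈ (l.get ⟨i, by omega⟩).E → e ∈ (l.get ⟨j, hj⟩).E →
      e ∈ (l.get ⟨i, by omega⟩).T := by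
  induction h with
  | single P => intro i j hij hj; simp at hj; omega
  | cons hgl hglue ih =>
    rename_i P₀ Q R ls
    intro i j hij hj e hei hej
    cases i with
    | zero =>
      obtain ⟨k, hk⟩ : ∃ k, j = k + 1 := ⟨j - 1, by omega⟩
      subst hk
      have hkl : k < ls.length := by simpa using hj
      have heQ : e ∈ Q.E := (glist_E hgl e).mpr ⟨⟨k, hkl⟩, hej⟩
      exact hglue.inter e hei heQ
    | succ m =>
      obtain ⟨k, hk⟩ : ∃ k, j = k + 1 := ⟨j - 1, by omega⟩
      subst hk
      have hkl : k < ls.length := by simpa using hj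
      exact ih m k (by omega) hkl e hei hej

lemma glist_between {l : List (Ipomset Λ)} {P : Ipomset Λ} (hg : IsGluingList l P) :
    ∀ d i k (hk : k < l.length) (hik : i + d ≤ k) e,
      e ∈ (l.get ⟨i, by omega⟩).E → e ∈ (l.get ⟨k, hk⟩).E →
      e ∈ (l.get ⟨i + d, by omega⟩).E := by
  intro d
  induction d with
  | zero => intro i k hk hik e h1 h2; simpa using h1
  | succ m ih =>
    intro i k hk hik e h1 h2
    have hT : e ∈ (l.get ⟨i, by omega⟩).T := glist_chainT hg i k (by omega) hk e h1 h2
    have hS : e ∈ (l.get ⟨i + 1, by omega⟩).S := by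
      rw [← glist_TS hg i (by omega)]; exact hT
    have h1' : e ∈ (l.get ⟨i + 1, by omega⟩).E := (l.get _).S_sub hS
    have hres := ih (i + 1) k hk (by omega) e h1' h2
    have hidx : i + 1 + m = i + (m + 1) := by omega
    simp only [hidx] at hres
    exact hres

end Step13Aux
namespace Step13Aux

variable {Λ : Type}

lemma get_idx_congr {α : Type} (l : List α) {i j : ℕ} (hi : i < l.length) (h : i = j) :
    l.get ⟨i, hi⟩ = l.get ⟨j, h ▸ hi⟩ := by subst h; rfl

/-- `a` is terminated at step `i`. -/
def TermAt (l : List (Ipomset Λ)) (a : ℕ) (i : Fin l.length) : Prop :=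
  a ∈ (l.get i).E ∧ a ∉ (l.get i).T

/-- `b` is started at step `j`. -/
def StartAt (l : List (Ipomset Λ)) (b : ℕ) (j : Fin l.length) : Prop :=
  b ∈ (l.get j).E ∧ b ∉ (l.get j).S

lemma startable {ls : List (Ipomset Λ)} {Q : Ipomset Λ} (hg : IsGluingList ls Q) (b : ℕ) :
    (b ∈ Q.E ∧ b ∉ Q.S) ↔ ∃ j : Fin ls.length, StartAt ls b j := by
  classical
  constructor
  · rintro ⟨hbE, hbS⟩
    obtain ⟨j0, hj0⟩ := (glist_E hg b).mp hbE
    have hex : ∃ i, ∃ h : i < ls.length, b ∈ (ls.get ⟨i, h⟩).E := ⟨j0, j0.isLt, hj0⟩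
    set m := Nat.find hex with hmdef
    obtain ⟨hmlt, hmE⟩ := Nat.find_spec hex
    refine ⟨⟨m, hmlt⟩, hmE, ?_⟩
    intro hS
    by_cases hm0 : m = 0
    · apply hbS
      rw [glist_S hg (by omega)]
      have : (⟨m, hmlt⟩ : Fin ls.length) = ⟨0, by omega⟩ := Fin.ext (by simp [hm0])
      rwa [this] at hS
    · have hTS := glist_TS hg (m - 1) (by omega)
      rw [get_idx_congr ls _ (show m - 1 + 1 = m by omega)] at hTS
      have hS' : b ∈ (ls.get ⟨m - 1, by omega⟩).T := by rw [hTS]; exact hS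
      have hE' : b ∈ (ls.get ⟨m - 1, by omega⟩).E := (ls.get _).T_sub hS'
      exact Nat.find_min hex (show m - 1 < m by omega) ⟨by omega, hE'⟩
  · rintro ⟨j, hjE, hjS⟩
    refine ⟨(glist_E hg b).mpr ⟨j, hjE⟩, ?_⟩
    intro hbS
    apply hjS
    have h0 : 0 < ls.length := glist_length_pos hg
    have hb0S : b ∈ (ls.get ⟨0, h0⟩).S := by rw [← glist_S hg h0]; exact hbS
    have hb0E : b ∈ (ls.get ⟨0, h0⟩).E := (ls.get _).S_sub hb0S
    by_cases hj0 : (j : ℕ) = 0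
    · have : j = ⟨0, h0⟩ := Fin.ext (by simp [hj0])
      rw [this]; exact hb0S
    · have hbprev : b ∈ (ls.get ⟨(j : ℕ) - 1, by omega⟩).E := by
        have := glist_between hg ((j : ℕ) - 1) 0 (j : ℕ) (by omega) (by omega) b hb0E
          (by convert hjE using 2)
        rw [get_idx_congr ls _ (show 0 + ((j:ℕ) - 1) = (j:ℕ) - 1 by omega)] at this
        exact this
      have hT : b ∈ (ls.get ⟨(j : ℕ) - 1, by omega⟩).T :=
        glist_chainT hg ((j:ℕ) - 1) (j : ℕ) (by omega) j.isLt b hbprev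
          (by convert hjE using 2)
      have hTS := glist_TS hg ((j:ℕ) - 1) (by omega)
      rw [get_idx_congr ls _ (show (j:ℕ) - 1 + 1 = (j:ℕ) by omega)] at hTS
      rw [hTS] at hT
      convert hT using 2

lemma glist_lt {l : List (Ipomset Λ)} {P : Ipomset Λ} (hg : IsGluingList l P) :
    (∀ Q ∈ l, Q.Discrete) → ∀ a b, (P.lt a b ↔
      ∃ i j : Fin l.length, (i : ℕ) < (j : ℕ) ∧ TermAt l a i ∧ StartAt l b j) := by
  induction hg with
  | single P =>
    intro hd a b
    constructor
    · intro h; exact absurd h (hd P (by simp) a b)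
    · rintro ⟨i, j, hij, -, -⟩
      have := i.isLt; have := j.isLt
      simp only [List.length_singleton] at *
      omega
  | cons hgl hglue ih =>
    rename_i P₀ Q R ls
    intro hd a b
    have hd0 : P₀.Discrete := hd P₀ (List.mem_cons_self)
    have hdls : ∀ Q' ∈ ls, Q'.Discrete := fun Q' h => hd Q' (List.mem_cons_of_mem _ h)
    have ihlt := ih hdls
    have hfull : IsGluingList (P₀ :: ls) R := IsGluingList.cons hgl hglue
    set RHS : ℕ → ℕ → Prop := fun u v =>
      ∃ i j : Fin (P₀ :: ls).length, (i : ℕ) < (j : ℕ) ∧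
        TermAt (P₀ :: ls) u i ∧ StartAt (P₀ :: ls) v j with hRHS
    have hbase : ∀ u v, glueBase P₀ Q u v → RHS u v := by
      rintro u v (h | h | ⟨huE, huT, hvE, hvS⟩)
      · exact absurd h (hd0 u v)
      · obtain ⟨i, j, hij, hti, hsj⟩ := (ihlt u v).mp h
        exact ⟨i.succ, j.succ, by simpa using hij, hti, hsj⟩
      · obtain ⟨j, hsj⟩ := (startable hgl v).mp ⟨hvE, hvS⟩
        exact ⟨⟨0, Nat.succ_pos _⟩, j.succ, show (0:ℕ) < (j:ℕ) + 1 from Nat.succ_pos _,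
          ⟨huE, huT⟩, hsj⟩
    have htrans : ∀ u v w, RHS u v → RHS v w → RHS u w := by
      rintro u v w ⟨i, j, hij, hti, hsj⟩ ⟨i', j', hij', hti', hsj'⟩
      refine ⟨i, j', ?_, hti, hsj'⟩
      by_contra hcon
      -- then j' ≤ i, so i' < j' ≤ i < j, in particular i' < j
      have hle : (j : ℕ) ≤ (i' : ℕ) := by
        by_contra hle'
        -- i' < j : chainT gives v ∈ step i' .T, contradicting TermAt v i'
        exact hti'.2 (glist_chainT hfull (i' : ℕ) (j : ℕ) (by omega) j.isLt v
          (by convert hti'.1 using 2) (by convert hsj.1 using 2))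
      omega
    constructor
    · intro h
      rw [hglue.lt_eq] at h
      induction h with
      | single h' => exact hbase _ _ h'
      | tail h1 h2 ih2 => exact htrans _ _ _ ih2 (hbase _ _ h2)
    · rintro ⟨⟨i, hi⟩, ⟨j, hj⟩, hij, hti, hsj⟩
      have hij' : i < j := hij
      rw [hglue.lt_eq]
      apply Relation.TransGen.single
      obtain ⟨k, rfl⟩ : ∃ k, j = k + 1 := ⟨j - 1, by omega⟩
      have hkl : k < ls.length := by
        have h3 := hj; simp only [List.length_cons] at h3; omega
      cases i with
      | zero =>
        have hstart : StartAt ls b ⟨k, hkl⟩ := hsj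
        have hbQ := (startable hgl b).mpr ⟨⟨k, hkl⟩, hstart⟩
        exact Or.inr (Or.inr ⟨hti.1, hti.2, hbQ.1, hbQ.2⟩)
      | succ m =>
        have hml : m < ls.length := by
          have h3 := hi; simp only [List.length_cons] at h3; omega
        refine Or.inr (Or.inl ((ihlt a b).mpr ⟨⟨m, hml⟩, ⟨k, hkl⟩, show m < k by omega,
          hti, hsj⟩))

end Step13Aux
namespace Step13Aux

variable {Λ : Type}

/-- The set of indices of steps containing `e`. -/
def loSet (l : List (Ipomset Λ)) (e : ℕ) : Set ℕ :=
  {i | ∃ h : i < l.length, e ∈ (l.get ⟨i, h⟩).E}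

/-- First step containing `e`. -/
noncomputable def lo (l : List (Ipomset Λ)) (e : ℕ) : ℕ := sInf (loSet l e)

/-- Last step containing `e`. -/
noncomputable def hi (l : List (Ipomset Λ)) (e : ℕ) : ℕ := sSup (loSet l e)

variable {l : List (Ipomset Λ)} {P : Ipomset Λ} {e x y : ℕ}

lemma loSet_nonempty (hg : IsGluingList l P) (he : e ∈ P.E) : (loSet l e).Nonempty := by
  obtain ⟨i, hi⟩ := (glist_E hg e).mp he
  exact ⟨(i : ℕ), i.isLt, by simpa using hi⟩

lemma loSet_bddAbove : BddAbove (loSet l e) :=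
  ⟨l.length, fun i hi => le_of_lt hi.1⟩

lemma lo_lt_length (hg : IsGluingList l P) (he : e ∈ P.E) : lo l e < l.length :=
  (Nat.sInf_mem (loSet_nonempty hg he)).1

lemma hi_lt_length (hg : IsGluingList l P) (he : e ∈ P.E) : hi l e < l.length :=
  (Nat.sSup_mem (loSet_nonempty hg he) loSet_bddAbove).1

lemma lo_mem_E (hg : IsGluingList l P) (he : e ∈ P.E) :
    e ∈ (l.get ⟨lo l e, lo_lt_length hg he⟩).E := by
  obtain ⟨h, hh⟩ := Nat.sInf_mem (loSet_nonempty hg he)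
  exact hh

lemma hi_mem_E (hg : IsGluingList l P) (he : e ∈ P.E) :
    e ∈ (l.get ⟨hi l e, hi_lt_length hg he⟩).E := by
  obtain ⟨h, hh⟩ := Nat.sSup_mem (loSet_nonempty hg he) loSet_bddAbove
  exact hh

lemma lo_le {i : ℕ} (h : i ∈ loSet l e) : lo l e ≤ i := Nat.sInf_le h

lemma le_hi {i : ℕ} (h : i ∈ loSet l e) : i ≤ hi l e := le_csSup loSet_bddAbove h

lemma lo_le_hi (hg : IsGluingList l P) (he : e ∈ P.E) : lo l e ≤ hi l e :=
  le_hi ⟨lo_lt_length hg he, lo_mem_E hg he⟩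

lemma startAt_lo (hg : IsGluingList l P) (he : e ∈ P.E) (heS : e ∉ P.S) :
    StartAt l e ⟨lo l e, lo_lt_length hg he⟩ := by
  refine ⟨lo_mem_E hg he, ?_⟩
  intro hS
  by_cases h0 : lo l e = 0
  · apply heS
    rw [glist_S hg (glist_length_pos hg)]
    rw [get_idx_congr l _ h0] at hS
    exact hS
  · have hTS := glist_TS hg (lo l e - 1) (by have := lo_lt_length hg he; omega)
    rw [get_idx_congr l _ (show lo l e - 1 + 1 = lo l e by omega)] at hTS
    rw [← hTS] at hS
    have hE : e ∈ (l.get ⟨lo l e - 1, by have := lo_lt_length hg he; omega⟩).E :=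
      (l.get _).T_sub hS
    have hle : lo l e ≤ lo l e - 1 := lo_le ⟨by have := lo_lt_length hg he; omega, hE⟩
    omega

lemma termAt_hi (hg : IsGluingList l P) (he : e ∈ P.E) (heT : e ∉ P.T) :
    TermAt l e ⟨hi l e, hi_lt_length hg he⟩ := by
  refine ⟨hi_mem_E hg he, ?_⟩
  intro hT
  by_cases hlast : hi l e = l.length - 1
  · apply heT
    rw [glist_T hg]
    rw [get_idx_congr l _ hlast] at hT
    exact hT
  · have hlt : hi l e + 1 < l.length := by have := hi_lt_length hg he; omega
    have hTS := glist_TS hg (hi l e) hlt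
    rw [hTS] at hT
    have hE : e ∈ (l.get ⟨hi l e + 1, hlt⟩).E := (l.get _).S_sub hT
    have hle : hi l e + 1 ≤ hi l e := le_hi ⟨hlt, hE⟩
    omega

lemma startAt_unique (hg : IsGluingList l P) {j : ℕ} (hjl : j < l.length)
    (hs : StartAt l e ⟨j, hjl⟩) : j = lo l e := by
  have he : e ∈ P.E := (glist_E hg e).mpr ⟨⟨j, hjl⟩, hs.1⟩
  have hlej : lo l e ≤ j := lo_le ⟨hjl, hs.1⟩
  rcases Nat.lt_or_ge (lo l e) j with hlt | hge
  · exfalso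
    have hprev : e ∈ (l.get ⟨j - 1, by omega⟩).E := by
      have h2 := glist_between hg (j - 1 - lo l e) (lo l e) j hjl (by omega) e
        (lo_mem_E hg he) hs.1
      rw [get_idx_congr l _ (show lo l e + (j - 1 - lo l e) = j - 1 by omega)] at h2
      exact h2
    have hT : e ∈ (l.get ⟨j - 1, by omega⟩).T :=
      glist_chainT hg (j - 1) j (by omega) hjl e hprev hs.1
    have hTS := glist_TS hg (j - 1) (by omega)
    rw [get_idx_congr l _ (show j - 1 + 1 = j by omega)] at hTS
    rw [hTS] at hT
    exact hs.2 hT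
  · omega

lemma termAt_unique (hg : IsGluingList l P) {i : ℕ} (hil : i < l.length)
    (ht : TermAt l e ⟨i, hil⟩) : i = hi l e := by
  have he : e ∈ P.E := (glist_E hg e).mpr ⟨⟨i, hil⟩, ht.1⟩
  have hlei : i ≤ hi l e := le_hi ⟨hil, ht.1⟩
  rcases Nat.lt_or_ge i (hi l e) with hlt | hge
  · exact absurd (glist_chainT hg i (hi l e) hlt (hi_lt_length hg he) e ht.1
      (hi_mem_E hg he)) ht.2
  · omega

lemma mem_T_hi (hg : IsGluingList l P) (heT : e ∈ P.T) : hi l e = l.length - 1 := by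
  have he : e ∈ P.E := P.T_sub heT
  have h1 : e ∈ (l.get ⟨l.length - 1, by have := glist_length_pos hg; omega⟩).T := by
    rw [← glist_T hg]; exact heT
  have h2 : l.length - 1 ∈ loSet l e :=
    ⟨by have := glist_length_pos hg; omega, (l.get _).T_sub h1⟩
  have h3 := le_hi h2
  have h4 := hi_lt_length hg he
  omega

lemma mem_S_lo (hg : IsGluingList l P) (heS : e ∈ P.S) : lo l e = 0 := by
  have h1 : e ∈ (l.get ⟨0, glist_length_pos hg⟩).S := by
    rw [← glist_S hg (glist_length_pos hg)]; exact heS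
  have h2 : (0 : ℕ) ∈ loSet l e := ⟨glist_length_pos hg, (l.get _).S_sub h1⟩
  have := lo_le h2
  omega

lemma termAt_not_T (hg : IsGluingList l P) {i : ℕ} (hil : i < l.length)
    (ht : TermAt l e ⟨i, hil⟩) : e ∉ P.T := by
  intro heT
  have hu := termAt_unique hg hil ht
  have h1 := mem_T_hi hg heT
  apply ht.2
  rw [get_idx_congr l _ (show i = l.length - 1 by omega)]
  rw [← glist_T hg]
  exact heT

lemma startAt_not_S (hg : IsGluingList l P) {j : ℕ} (hjl : j < l.length)
    (hs : StartAt l e ⟨j, hjl⟩) : e ∉ P.S := by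
  intro heS
  have hu := startAt_unique hg hjl hs
  have h1 := mem_S_lo hg heS
  apply hs.2
  rw [get_idx_congr l _ (show j = 0 by omega)]
  rw [← glist_S hg (glist_length_pos hg)]
  exact heS

lemma lt_iff_hi_lo (hg : IsGluingList l P) (hd : ∀ Q ∈ l, Q.Discrete)
    {a b : ℕ} (ha : a ∈ P.E) (hb : b ∈ P.E) :
    P.lt a b ↔ a ∉ P.T ∧ b ∉ P.S ∧ hi l a < lo l b := by
  rw [glist_lt hg hd a b]
  constructor
  · rintro ⟨i, j, hij, hti, hsj⟩
    refine ⟨termAt_not_T hg i.isLt hti, startAt_not_S hg j.isLt hsj, ?_⟩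
    have h1 : (i : ℕ) = hi l a := termAt_unique hg i.isLt hti
    have h2 : (j : ℕ) = lo l b := startAt_unique hg j.isLt hsj
    omega
  · rintro ⟨haT, hbS, hlt⟩
    exact ⟨⟨hi l a, hi_lt_length hg ha⟩, ⟨lo l b, lo_lt_length hg hb⟩, hlt,
      termAt_hi hg ha haT, startAt_lo hg hb hbS⟩

end Step13Aux
namespace Step13Aux

open Ipomset

variable {Λ : Type} {l : List (Ipomset Λ)} {P : Ipomset Λ} {e x y : ℕ}

lemma lo_isStarter (hg : IsGluingList l P) (hQ : ∀ Q ∈ l, Q.IsStarter ∨ Q.IsTerminator)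
    (he : e ∈ P.E) (heS : e ∉ P.S) :
    (l.get ⟨lo l e, lo_lt_length hg he⟩).IsStarter := by
  rcases hQ _ (l.get_mem _) with h | h
  · exact h
  · exfalso
    have hs := startAt_lo hg he heS
    exact hs.2 (by rw [h.2]; exact hs.1)

lemma hi_isTerminator (hg : IsGluingList l P) (hQ : ∀ Q ∈ l, Q.IsStarter ∨ Q.IsTerminator)
    (he : e ∈ P.E) (heT : e ∉ P.T) :
    (l.get ⟨hi l e, hi_lt_length hg he⟩).IsTerminator := by
  rcases hQ _ (l.get_mem _) with h | h
  · exfalso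
    have ht := termAt_hi hg he heT
    exact ht.2 (by rw [h.2]; exact ht.1)
  · exact h

lemma lo_not_isTerminator (hg : IsGluingList l P) (he : e ∈ P.E) (heS : e ∉ P.S) :
    ¬ (l.get ⟨lo l e, lo_lt_length hg he⟩).IsTerminator := by
  intro h
  have hs := startAt_lo hg he heS
  exact hs.2 (by rw [h.2]; exact hs.1)

lemma hi_not_isStarter (hg : IsGluingList l P) (he : e ∈ P.E) (heT : e ∉ P.T) :
    ¬ (l.get ⟨hi l e, hi_lt_length hg he⟩).IsStarter := by
  intro h
  have ht := termAt_hi hg he heT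
  exact ht.2 (by rw [h.2]; exact ht.1)

lemma alt_pair (halt : Alternating l) {i : ℕ} (h1 : i + 1 < l.length) :
    ¬((l.get ⟨i, by omega⟩).IsStarter ∧ (l.get ⟨i + 1, h1⟩).IsStarter) ∧
    ¬((l.get ⟨i, by omega⟩).IsTerminator ∧ (l.get ⟨i + 1, h1⟩).IsTerminator) :=
  List.isChain_iff_getElem.mp halt i (by omega)

/-- After a starter comes a terminator which is not a starter. -/
lemma next_of_starter (halt : Alternating l) (hQ : ∀ Q ∈ l, Q.IsStarter ∨ Q.IsTerminator)
    {i : ℕ} (h1 : i + 1 < l.length) (hs : (l.get ⟨i, by omega⟩).IsStarter) :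
    (l.get ⟨i + 1, h1⟩).IsTerminator ∧ ¬ (l.get ⟨i + 1, h1⟩).IsStarter := by
  have hp := (alt_pair halt h1).1
  have hns : ¬ (l.get ⟨i + 1, h1⟩).IsStarter := fun h => hp ⟨hs, h⟩
  rcases hQ _ (l.get_mem _) with h | h
  · exact absurd h hns
  · exact ⟨h, hns⟩

/-- Before a starter comes a terminator which is not a starter. -/
lemma prev_of_starter (halt : Alternating l) (hQ : ∀ Q ∈ l, Q.IsStarter ∨ Q.IsTerminator)
    {i : ℕ} (h1 : i + 1 < l.length) (hs : (l.get ⟨i + 1, h1⟩).IsStarter) :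
    (l.get ⟨i, by omega⟩).IsTerminator ∧ ¬ (l.get ⟨i, by omega⟩).IsStarter := by
  have hp := (alt_pair halt h1).1
  have hns : ¬ (l.get ⟨i, by omega⟩).IsStarter := fun h => hp ⟨h, hs⟩
  rcases hQ _ (l.get_mem _) with h | h
  · exact absurd h hns
  · exact ⟨h, hns⟩

/-- After a terminator comes a starter which is not a terminator. -/
lemma next_of_terminator (halt : Alternating l) (hQ : ∀ Q ∈ l, Q.IsStarter ∨ Q.IsTerminator)
    {i : ℕ} (h1 : i + 1 < l.length) (hs : (l.get ⟨i, by omega⟩).IsTerminator) :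
    (l.get ⟨i + 1, h1⟩).IsStarter ∧ ¬ (l.get ⟨i + 1, h1⟩).IsTerminator := by
  have hp := (alt_pair halt h1).2
  have hns : ¬ (l.get ⟨i + 1, h1⟩).IsTerminator := fun h => hp ⟨hs, h⟩
  rcases hQ _ (l.get_mem _) with h | h
  · exact ⟨h, hns⟩
  · exact absurd h hns

/-- Before a terminator comes a starter which is not a terminator. -/
lemma prev_of_terminator (halt : Alternating l) (hQ : ∀ Q ∈ l, Q.IsStarter ∨ Q.IsTerminator)
    {i : ℕ} (h1 : i + 1 < l.length) (hs : (l.get ⟨i + 1, h1⟩).IsTerminator) :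
    (l.get ⟨i, by omega⟩).IsStarter ∧ ¬ (l.get ⟨i, by omega⟩).IsTerminator := by
  have hp := (alt_pair halt h1).2
  have hns : ¬ (l.get ⟨i, by omega⟩).IsTerminator := fun h => hp ⟨h, hs⟩
  rcases hQ _ (l.get_mem _) with h | h
  · exact ⟨h, hns⟩
  · exact absurd h hns

/-- A terminator which is not a starter terminates some event. -/
lemma exists_term_event (hg : IsGluingList l P) {k : ℕ} (hk : k < l.length)
    (hterm : (l.get ⟨k, hk⟩).IsTerminator) (hnst : ¬ (l.get ⟨k, hk⟩).IsStarter) :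
    ∃ z, z ∈ P.E ∧ z ∉ P.T ∧ hi l z = k := by
  have hTneE : (l.get ⟨k, hk⟩).T ≠ (l.get ⟨k, hk⟩).E := fun h => hnst ⟨hterm.1, h⟩
  obtain ⟨z, hzE, hzT⟩ := Finset.exists_of_ssubset (ssubset_of_subset_of_ne
    (l.get ⟨k, hk⟩).T_sub hTneE)
  have ht : TermAt l z ⟨k, hk⟩ := ⟨hzE, hzT⟩
  exact ⟨z, (glist_E hg z).mpr ⟨⟨k, hk⟩, hzE⟩, termAt_not_T hg hk ht,
    (termAt_unique hg hk ht).symm⟩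

/-- A starter which is not a terminator starts some event. -/
lemma exists_start_event (hg : IsGluingList l P) {k : ℕ} (hk : k < l.length)
    (hst : (l.get ⟨k, hk⟩).IsStarter) (hnt : ¬ (l.get ⟨k, hk⟩).IsTerminator) :
    ∃ z, z ∈ P.E ∧ z ∉ P.S ∧ lo l z = k := by
  have hSneE : (l.get ⟨k, hk⟩).S ≠ (l.get ⟨k, hk⟩).E := fun h => hnt ⟨hst.1, h⟩
  obtain ⟨z, hzE, hzS⟩ := Finset.exists_of_ssubset (ssubset_of_subset_of_ne
    (l.get ⟨k, hk⟩).S_sub hSneE)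
  have hs : StartAt l z ⟨k, hk⟩ := ⟨hzE, hzS⟩
  exact ⟨z, (glist_E hg z).mpr ⟨⟨k, hk⟩, hzE⟩, startAt_not_S hg hk hs,
    (startAt_unique hg hk hs).symm⟩

end Step13Aux
namespace Step13Aux

open Ipomset

variable {Λ : Type} {l : List (Ipomset Λ)} {P : Ipomset Λ} {x y : ℕ}

section Main

/-- The index of a starter never equals the index of a terminator. -/
lemma lo_ne_hi (hg : IsGluingList l P) (hQ : ∀ Q ∈ l, Q.IsStarter ∨ Q.IsTerminator) (hx : x ∈ P.E) (hxS : x ∉ P.S) (hy : y ∈ P.E) (hyT : y ∉ P.T) :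
    lo l x ≠ hi l y := by
  intro h
  have h1 := lo_isStarter hg hQ hx hxS
  have h2 := hi_not_isStarter hg hy hyT
  rw [get_idx_congr l _ h] at h1
  exact h2 h1

lemma lo_lt_lo_iff (hg : IsGluingList l P) (hQ : ∀ Q ∈ l, Q.IsStarter ∨ Q.IsTerminator) (halt : Alternating l) (hx : x ∈ P.E) (hy : y ∈ P.E) (hxS : x ∉ P.S) (hyS : y ∉ P.S) :
    lo l y < lo l x ↔ ∃ z, z ∈ P.E ∧ P.lt z x ∧ ¬ P.lt z y := by
  have hd : ∀ Q ∈ l, Q.Discrete := fun Q h => discrete_of_sot (hQ Q h)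
  constructor
  · intro hlt
    have hl1 : lo l y + 1 < l.length := by
      have := lo_lt_length hg hx; omega
    have hstar := lo_isStarter hg hQ hy hyS
    obtain ⟨hterm, hnst⟩ := next_of_starter halt hQ hl1 hstar
    obtain ⟨z, hzE, hzT, hziz⟩ := exists_term_event hg hl1 hterm hnst
    have hne : lo l y + 1 ≠ lo l x := by
      intro h
      apply hnst
      have hsx := lo_isStarter hg hQ hx hxS
      rw [get_idx_congr l _ h.symm] at hsx
      exact hsx
    refine ⟨z, hzE, ?_, ?_⟩
    · exact (lt_iff_hi_lo hg hd hzE hx).mpr ⟨hzT, hxS, by omega⟩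
    · intro hzy
      have := ((lt_iff_hi_lo hg hd hzE hy).mp hzy).2.2
      omega
  · rintro ⟨z, hzE, hzx, hzy⟩
    have h1 := (lt_iff_hi_lo hg hd hzE hx).mp hzx
    have h2 : ¬ (hi l z < lo l y) := fun h =>
      hzy ((lt_iff_hi_lo hg hd hzE hy).mpr ⟨h1.1, hyS, h⟩)
    omega

lemma hi_lt_hi_iff (hg : IsGluingList l P) (hQ : ∀ Q ∈ l, Q.IsStarter ∨ Q.IsTerminator) (halt : Alternating l) (hx : x ∈ P.E) (hy : y ∈ P.E) (hxT : x ∉ P.T) (hyT : y ∉ P.T) :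
    hi l x < hi l y ↔ ∃ z, z ∈ P.E ∧ P.lt x z ∧ ¬ P.lt y z := by
  have hd : ∀ Q ∈ l, Q.Discrete := fun Q h => discrete_of_sot (hQ Q h)
  constructor
  · intro hlt
    have hl1 : hi l x + 1 < l.length := by
      have := hi_lt_length hg hy; omega
    have hterm := hi_isTerminator hg hQ hx hxT
    obtain ⟨hstar, hnt⟩ := next_of_terminator halt hQ hl1 hterm
    obtain ⟨z, hzE, hzS, hlz⟩ := exists_start_event hg hl1 hstar hnt
    refine ⟨z, hzE, ?_, ?_⟩
    · exact (lt_iff_hi_lo hg hd hx hzE).mpr ⟨hxT, hzS, by omega⟩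
    · intro hyz
      have := ((lt_iff_hi_lo hg hd hy hzE).mp hyz).2.2
      omega
  · rintro ⟨z, hzE, hxz, hyz⟩
    have h1 := (lt_iff_hi_lo hg hd hx hzE).mp hxz
    have h2 : ¬ (hi l y < lo l z) := fun h =>
      hyz ((lt_iff_hi_lo hg hd hy hzE).mpr ⟨hyT, h1.2.1, h⟩)
    omega

lemma lo_eq_zero_iff (hg : IsGluingList l P) (hQ : ∀ Q ∈ l, Q.IsStarter ∨ Q.IsTerminator) (halt : Alternating l) (hx : x ∈ P.E) (hxS : x ∉ P.S) :
    lo l x = 0 ↔ ∀ z ∈ P.E, ¬ P.lt z x := by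
  have hd : ∀ Q ∈ l, Q.Discrete := fun Q h => discrete_of_sot (hQ Q h)
  constructor
  · intro h0 z hz hzx
    have := ((lt_iff_hi_lo hg hd hz hx).mp hzx).2.2
    omega
  · intro hall
    by_contra h0
    have hip : lo l x - 1 + 1 = lo l x := by omega
    have h1 : lo l x - 1 + 1 < l.length := by rw [hip]; exact lo_lt_length hg hx
    have hstar' : (l.get ⟨lo l x - 1 + 1, h1⟩).IsStarter := by
      rw [get_idx_congr l _ hip]; exact lo_isStarter hg hQ hx hxS
    obtain ⟨hterm, hnst⟩ := prev_of_starter halt hQ h1 hstar'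
    obtain ⟨z, hzE, hzT, hhz⟩ := exists_term_event hg (by omega) hterm hnst
    exact hall z hzE ((lt_iff_hi_lo hg hd hzE hx).mpr ⟨hzT, hxS, by omega⟩)

lemma hi_eq_last_iff (hg : IsGluingList l P) (hQ : ∀ Q ∈ l, Q.IsStarter ∨ Q.IsTerminator) (halt : Alternating l) (hx : x ∈ P.E) (hxT : x ∉ P.T) :
    hi l x = l.length - 1 ↔ ∀ z ∈ P.E, ¬ P.lt x z := by
  have hd : ∀ Q ∈ l, Q.Discrete := fun Q h => discrete_of_sot (hQ Q h)
  constructor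
  · intro h0 z hz hxz
    have h1 := ((lt_iff_hi_lo hg hd hx hz).mp hxz).2.2
    have := lo_lt_length hg hz
    omega
  · intro hall
    by_contra h0
    have h1 : hi l x + 1 < l.length := by
      have := hi_lt_length hg hx; omega
    have hterm := hi_isTerminator hg hQ hx hxT
    obtain ⟨hstar, hnt⟩ := next_of_terminator halt hQ h1 hterm
    obtain ⟨z, hzE, hzS, hlz⟩ := exists_start_event hg h1 hstar hnt
    exact hall z hzE ((lt_iff_hi_lo hg hd hx hzE).mpr ⟨hxT, hzS, by omega⟩)

lemma lo_eq_last_iff (hg : IsGluingList l P) (hQ : ∀ Q ∈ l, Q.IsStarter ∨ Q.IsTerminator) (halt : Alternating l) (hx : x ∈ P.E) (hxS : x ∉ P.S) :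
    lo l x = l.length - 1 ↔ x ∈ P.T ∧ ∀ z ∈ P.E, z ∉ P.T → P.lt z x := by
  have hd : ∀ Q ∈ l, Q.Discrete := fun Q h => discrete_of_sot (hQ Q h)
  constructor
  · intro h0
    have hstar := lo_isStarter hg hQ hx hxS
    have hxT : x ∈ P.T := by
      rw [glist_T hg]
      rw [get_idx_congr l _ h0] at hstar
      rw [hstar.2, ← get_idx_congr l _ h0]
      exact lo_mem_E hg hx
    refine ⟨hxT, fun z hz hzT => ?_⟩
    have ht := termAt_hi hg hz hzT
    have hne : hi l z ≠ l.length - 1 := by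
      intro hh
      apply ht.2
      have hstar' := hstar
      rw [get_idx_congr l _ (show lo l x = hi l z by omega)] at hstar'
      rw [hstar'.2]
      exact ht.1
    refine (lt_iff_hi_lo hg hd hz hx).mpr ⟨hzT, hxS, ?_⟩
    have := hi_lt_length hg hz
    omega
  · rintro ⟨hxT, hall⟩
    by_contra h0
    have h1 : lo l x + 1 < l.length := by
      have := lo_lt_length hg hx; omega
    have hstar := lo_isStarter hg hQ hx hxS
    obtain ⟨hterm, hnst⟩ := next_of_starter halt hQ h1 hstar
    obtain ⟨z, hzE, hzT, hhz⟩ := exists_term_event hg h1 hterm hnst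
    have := ((lt_iff_hi_lo hg hd hzE hx).mp (hall z hzE hzT)).2.2
    omega

lemma hi_eq_zero_iff (hg : IsGluingList l P) (hQ : ∀ Q ∈ l, Q.IsStarter ∨ Q.IsTerminator) (halt : Alternating l) (hx : x ∈ P.E) (hxT : x ∉ P.T) :
    hi l x = 0 ↔ x ∈ P.S ∧ ∀ z ∈ P.E, z ∉ P.S → P.lt x z := by
  have hd : ∀ Q ∈ l, Q.Discrete := fun Q h => discrete_of_sot (hQ Q h)
  constructor
  · intro h0
    have hterm := hi_isTerminator hg hQ hx hxT
    have hxS : x ∈ P.S := by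
      rw [glist_S hg (glist_length_pos hg)]
      rw [get_idx_congr l _ h0] at hterm
      rw [hterm.2, ← get_idx_congr l _ h0]
      exact hi_mem_E hg hx
    refine ⟨hxS, fun z hz hzS => ?_⟩
    have hs := startAt_lo hg hz hzS
    have hne : lo l z ≠ 0 := by
      intro hh
      apply hs.2
      have hterm' := hterm
      rw [get_idx_congr l _ (show hi l x = lo l z by omega)] at hterm'
      rw [hterm'.2]
      exact hs.1
    exact (lt_iff_hi_lo hg hd hx hz).mpr ⟨hxT, hzS, by omega⟩
  · rintro ⟨hxS, hall⟩
    by_contra h0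
    have hip : hi l x - 1 + 1 = hi l x := by omega
    have h1 : hi l x - 1 + 1 < l.length := by rw [hip]; exact hi_lt_length hg hx
    have hterm' : (l.get ⟨hi l x - 1 + 1, h1⟩).IsTerminator := by
      rw [get_idx_congr l _ hip]; exact hi_isTerminator hg hQ hx hxT
    obtain ⟨hstar, hnt⟩ := prev_of_terminator halt hQ h1 hterm'
    obtain ⟨z, hzE, hzS, hlz⟩ := exists_start_event hg (by omega) hstar hnt
    have := ((lt_iff_hi_lo hg hd hx hzE).mp (hall z hzE hzS)).2.2
    omega

end Main

end Step13Aux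
namespace Step13Aux

open Ipomset

variable {Λ : Type} {l : List (Ipomset Λ)} {P : Ipomset Λ} {e x y : ℕ}

lemma ecast (a : ℕ) : ((a : ℕ) : EReal) + 1 = ((a + 1 : ℕ) : EReal) := by
  push_cast; ring

lemma natE_lt_natE {a b : ℕ} : ((a : ℕ) : EReal) + 1 < ((b : ℕ) : EReal) + 1 ↔ a < b := by
  rw [ecast, ecast]
  constructor
  · intro h; have : a + 1 < b + 1 := by exact_mod_cast h
    omega
  · intro h; have : a + 1 < b + 1 := by omega
    exact_mod_cast this

lemma natE_eq_natE {a b : ℕ} : (((a : ℕ) : EReal) + 1 = ((b : ℕ) : EReal) + 1) ↔ a = b := by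
  rw [ecast, ecast]
  constructor
  · intro h; have : a + 1 = b + 1 := by exact_mod_cast h
    omega
  · intro h; have : a + 1 = b + 1 := by omega
    exact_mod_cast this

lemma bot_lt_natE (a : ℕ) : (⊥ : EReal) < ((a : ℕ) : EReal) + 1 := by
  rw [ecast]
  exact bot_lt_iff_ne_bot.mpr (EReal.natCast_ne_bot _)

lemma natE_lt_top (a : ℕ) : ((a : ℕ) : EReal) + 1 < (⊤ : EReal) := by
  rw [ecast]
  exact lt_top_iff_ne_top.mpr (EReal.natCast_ne_top _)

lemma one_eq_natE : (1 : EReal) = ((0 : ℕ) : EReal) + 1 := by norm_num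

lemma stIdx_eval (hg : IsGluingList l P) (he : e ∈ P.E) :
    StIdx P l e = if e ∈ P.S then ⊥ else ((lo l e : ℕ) : EReal) + 1 := by
  unfold StIdx
  by_cases h : e ∈ P.S
  · simp [h]
  · simp only [h, if_false]
    apply le_antisymm
    · exact sInf_le ⟨⟨lo l e, lo_lt_length hg he⟩, lo_mem_E hg he, rfl⟩
    · apply le_sInf
      rintro r ⟨ℓ, hℓ, rfl⟩
      have hle : lo l e ≤ (ℓ : ℕ) := lo_le ⟨ℓ.isLt, by convert hℓ using 2⟩
      rw [ecast, ecast]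
      exact_mod_cast Nat.succ_le_succ hle

lemma teIdx_eval (hg : IsGluingList l P) (he : e ∈ P.E) :
    TeIdx P l e = if e ∈ P.T then ⊤ else ((hi l e : ℕ) : EReal) + 1 := by
  unfold TeIdx
  by_cases h : e ∈ P.T
  · simp [h]
  · simp only [h, if_false]
    apply le_antisymm
    · apply sSup_le
      rintro r ⟨ℓ, hℓ, rfl⟩
      have hle : (ℓ : ℕ) ≤ hi l e := le_hi ⟨ℓ.isLt, by convert hℓ using 2⟩
      rw [ecast, ecast]
      exact_mod_cast Nat.succ_le_succ hle
    · exact le_sSup ⟨⟨hi l e, hi_lt_length hg he⟩, hi_mem_E hg he, rfl⟩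

lemma stIdx_eval_S (hg : IsGluingList l P) (he : e ∈ P.E) (heS : e ∈ P.S) :
    StIdx P l e = ⊥ := by rw [stIdx_eval hg he, if_pos heS]

lemma stIdx_eval_nS (hg : IsGluingList l P) (he : e ∈ P.E) (heS : e ∉ P.S) :
    StIdx P l e = ((lo l e : ℕ) : EReal) + 1 := by rw [stIdx_eval hg he, if_neg heS]

lemma teIdx_eval_T (hg : IsGluingList l P) (he : e ∈ P.E) (heT : e ∈ P.T) :
    TeIdx P l e = ⊤ := by rw [teIdx_eval hg he, if_pos heT]

lemma teIdx_eval_nT (hg : IsGluingList l P) (he : e ∈ P.E) (heT : e ∉ P.T) :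
    TeIdx P l e = ((hi l e : ℕ) : EReal) + 1 := by rw [teIdx_eval hg he, if_neg heT]

section Bridges

variable (hg : IsGluingList l P) (hQ : ∀ Q ∈ l, Q.IsStarter ∨ Q.IsTerminator)
  (halt : Alternating l) (hx : x ∈ P.E) (hy : y ∈ P.E)

include hg hQ halt hx hy

set_option linter.unusedSectionVars false

lemma stIdx_lt_stIdx_iff :
    StIdx P l x < StIdx P l y ↔
      (y ∉ P.S ∧ (x ∈ P.S ∨ ∃ z, z ∈ P.E ∧ P.lt z y ∧ ¬ P.lt z x)) := by
  by_cases hxS : x ∈ P.S <;> by_cases hyS : y ∈ P.S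
  · rw [stIdx_eval_S hg hx hxS, stIdx_eval_S hg hy hyS]
    exact iff_of_false (lt_irrefl _) (fun h => h.1 hyS)
  · rw [stIdx_eval_S hg hx hxS, stIdx_eval_nS hg hy hyS]
    exact iff_of_true (bot_lt_natE _) ⟨hyS, Or.inl hxS⟩
  · rw [stIdx_eval_nS hg hx hxS, stIdx_eval_S hg hy hyS]
    exact iff_of_false not_lt_bot (fun h => h.1 hyS)
  · rw [stIdx_eval_nS hg hx hxS, stIdx_eval_nS hg hy hyS]
    rw [natE_lt_natE, lo_lt_lo_iff hg hQ halt hy hx hyS hxS]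
    constructor
    · intro h; exact ⟨hyS, Or.inr h⟩
    · rintro ⟨-, (h | h)⟩
      exacts [absurd h hxS, h]

lemma stIdx_eq_stIdx_iff :
    StIdx P l x = StIdx P l y ↔
      ((x ∈ P.S ∧ y ∈ P.S) ∨
        (x ∉ P.S ∧ y ∉ P.S ∧ ∀ z ∈ P.E, (P.lt z x ↔ P.lt z y))) := by
  by_cases hxS : x ∈ P.S <;> by_cases hyS : y ∈ P.S
  · rw [stIdx_eval_S hg hx hxS, stIdx_eval_S hg hy hyS]
    simp [hxS, hyS]
  · rw [stIdx_eval_S hg hx hxS, stIdx_eval_nS hg hy hyS]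
    exact iff_of_false (bot_lt_natE _).ne
      (by rintro (⟨-, h⟩ | ⟨h, -⟩); exacts [hyS h, h hxS])
  · rw [stIdx_eval_nS hg hx hxS, stIdx_eval_S hg hy hyS]
    exact iff_of_false (bot_lt_natE _).ne'
      (by rintro (⟨h, -⟩ | ⟨-, h, -⟩); exacts [hxS h, h hyS])
  · rw [stIdx_eval_nS hg hx hxS, stIdx_eval_nS hg hy hyS]
    rw [natE_eq_natE]
    have hd : ∀ Q ∈ l, Q.Discrete := fun Q h => discrete_of_sot (hQ Q h)
    constructor
    · intro h
      refine Or.inr ⟨hxS, hyS, fun z hz => ?_⟩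
      rw [lt_iff_hi_lo hg hd hz hx, lt_iff_hi_lo hg hd hz hy, h]
      simp [hxS, hyS]
    · rintro (⟨h, -⟩ | ⟨-, -, h⟩)
      · exact absurd h hxS
      · by_contra hne
        rcases Nat.lt_or_ge (lo l x) (lo l y) with hlt | hge
        · obtain ⟨z, hz, h1, h2⟩ := (lo_lt_lo_iff hg hQ halt hy hx hyS hxS).mp hlt
          exact h2 ((h z hz).mpr h1)
        · have hlt : lo l y < lo l x := by omega
          obtain ⟨z, hz, h1, h2⟩ := (lo_lt_lo_iff hg hQ halt hx hy hxS hyS).mp hlt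
          exact h2 ((h z hz).mp h1)

lemma teIdx_lt_teIdx_iff :
    TeIdx P l x < TeIdx P l y ↔
      (x ∉ P.T ∧ (y ∈ P.T ∨ ∃ z, z ∈ P.E ∧ P.lt x z ∧ ¬ P.lt y z)) := by
  by_cases hxT : x ∈ P.T <;> by_cases hyT : y ∈ P.T
  · rw [teIdx_eval_T hg hx hxT, teIdx_eval_T hg hy hyT]
    exact iff_of_false (lt_irrefl _) (fun h => h.1 hxT)
  · rw [teIdx_eval_T hg hx hxT, teIdx_eval_nT hg hy hyT]
    exact iff_of_false not_top_lt (fun h => h.1 hxT)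
  · rw [teIdx_eval_nT hg hx hxT, teIdx_eval_T hg hy hyT]
    exact iff_of_true (natE_lt_top _) ⟨hxT, Or.inl hyT⟩
  · rw [teIdx_eval_nT hg hx hxT, teIdx_eval_nT hg hy hyT]
    rw [natE_lt_natE, hi_lt_hi_iff hg hQ halt hx hy hxT hyT]
    constructor
    · intro h; exact ⟨hxT, Or.inr h⟩
    · rintro ⟨-, (h | h)⟩
      exacts [absurd h hyT, h]

lemma teIdx_eq_teIdx_iff :
    TeIdx P l x = TeIdx P l y ↔
      ((x ∈ P.T ∧ y ∈ P.T) ∨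
        (x ∉ P.T ∧ y ∉ P.T ∧ ∀ z ∈ P.E, (P.lt x z ↔ P.lt y z))) := by
  by_cases hxT : x ∈ P.T <;> by_cases hyT : y ∈ P.T
  · rw [teIdx_eval_T hg hx hxT, teIdx_eval_T hg hy hyT]
    simp [hxT, hyT]
  · rw [teIdx_eval_T hg hx hxT, teIdx_eval_nT hg hy hyT]
    exact iff_of_false (natE_lt_top _).ne'
      (by rintro (⟨-, h⟩ | ⟨h, -⟩); exacts [hyT h, h hxT])
  · rw [teIdx_eval_nT hg hx hxT, teIdx_eval_T hg hy hyT]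
    exact iff_of_false (natE_lt_top _).ne
      (by rintro (⟨h, -⟩ | ⟨-, h, -⟩); exacts [hxT h, h hyT])
  · rw [teIdx_eval_nT hg hx hxT, teIdx_eval_nT hg hy hyT]
    rw [natE_eq_natE]
    have hd : ∀ Q ∈ l, Q.Discrete := fun Q h => discrete_of_sot (hQ Q h)
    constructor
    · intro h
      refine Or.inr ⟨hxT, hyT, fun z hz => ?_⟩
      rw [lt_iff_hi_lo hg hd hx hz, lt_iff_hi_lo hg hd hy hz, h]
      simp [hxT, hyT]
    · rintro (⟨h, -⟩ | ⟨-, -, h⟩)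
      · exact absurd h hxT
      · by_contra hne
        rcases Nat.lt_or_ge (hi l x) (hi l y) with hlt | hge
        · obtain ⟨z, hz, h1, h2⟩ := (hi_lt_hi_iff hg hQ halt hx hy hxT hyT).mp hlt
          exact h2 ((h z hz).mp h1)
        · have hlt : hi l y < hi l x := by omega
          obtain ⟨z, hz, h1, h2⟩ := (hi_lt_hi_iff hg hQ halt hy hx hyT hxT).mp hlt
          exact h2 ((h z hz).mpr h1)

lemma teIdx_lt_stIdx_iff : TeIdx P l x < StIdx P l y ↔ P.lt x y := by
  have hd : ∀ Q ∈ l, Q.Discrete := fun Q h => discrete_of_sot (hQ Q h)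
  by_cases hxT : x ∈ P.T <;> by_cases hyS : y ∈ P.S
  · rw [teIdx_eval_T hg hx hxT, stIdx_eval_S hg hy hyS]
    exact iff_of_false not_top_lt (P.T_max x hxT y)
  · rw [teIdx_eval_T hg hx hxT, stIdx_eval_nS hg hy hyS]
    exact iff_of_false not_top_lt (P.T_max x hxT y)
  · rw [teIdx_eval_nT hg hx hxT, stIdx_eval_S hg hy hyS]
    exact iff_of_false not_lt_bot (P.S_min y hyS x)
  · rw [teIdx_eval_nT hg hx hxT, stIdx_eval_nS hg hy hyS]
    rw [natE_lt_natE, lt_iff_hi_lo hg hd hx hy]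
    simp [hxT, hyS]

lemma stIdx_lt_teIdx_iff : StIdx P l x < TeIdx P l y ↔ ¬ P.lt y x := by
  have hd : ∀ Q ∈ l, Q.Discrete := fun Q h => discrete_of_sot (hQ Q h)
  by_cases hxS : x ∈ P.S <;> by_cases hyT : y ∈ P.T
  · rw [stIdx_eval_S hg hx hxS, teIdx_eval_T hg hy hyT]
    exact iff_of_true bot_lt_top (P.S_min x hxS y)
  · rw [stIdx_eval_S hg hx hxS, teIdx_eval_nT hg hy hyT]
    exact iff_of_true (bot_lt_natE _) (P.S_min x hxS y)
  · rw [stIdx_eval_nS hg hx hxS, teIdx_eval_T hg hy hyT]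
    exact iff_of_true (natE_lt_top _) (P.T_max y hyT x)
  · rw [stIdx_eval_nS hg hx hxS, teIdx_eval_nT hg hy hyT]
    rw [natE_lt_natE, lt_iff_hi_lo hg hd hy hx]
    have hne := lo_ne_hi hg hQ hx hxS hy hyT
    simp only [hyT, hxS, not_false_iff, true_and]
    omega

lemma stIdx_ne_teIdx : StIdx P l x ≠ TeIdx P l y := by
  by_cases hxS : x ∈ P.S <;> by_cases hyT : y ∈ P.T
  · rw [stIdx_eval_S hg hx hxS, teIdx_eval_T hg hy hyT]
    exact bot_lt_top.ne
  · rw [stIdx_eval_S hg hx hxS, teIdx_eval_nT hg hy hyT]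
    exact (bot_lt_natE _).ne
  · rw [stIdx_eval_nS hg hx hxS, teIdx_eval_T hg hy hyT]
    exact (natE_lt_top _).ne
  · rw [stIdx_eval_nS hg hx hxS, teIdx_eval_nT hg hy hyT]
    intro h
    exact lo_ne_hi hg hQ hx hxS hy hyT (natE_eq_natE.mp h)

lemma stIdx_eq_one_iff : StIdx P l x = 1 ↔ x ∉ P.S ∧ ∀ z ∈ P.E, ¬ P.lt z x := by
  rw [one_eq_natE]
  by_cases hxS : x ∈ P.S
  · rw [stIdx_eval_S hg hx hxS]
    exact iff_of_false (bot_lt_natE 0).ne (fun h => h.1 hxS)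
  · rw [stIdx_eval_nS hg hx hxS]
    rw [natE_eq_natE, lo_eq_zero_iff hg hQ halt hx hxS]
    simp [hxS]

lemma teIdx_eq_one_iff :
    TeIdx P l x = 1 ↔ x ∈ P.S ∧ x ∉ P.T ∧ ∀ z ∈ P.E, z ∉ P.S → P.lt x z := by
  rw [one_eq_natE]
  by_cases hxT : x ∈ P.T
  · rw [teIdx_eval_T hg hx hxT]
    exact iff_of_false (natE_lt_top 0).ne' (fun h => h.2.1 hxT)
  · rw [teIdx_eval_nT hg hx hxT]
    rw [natE_eq_natE, hi_eq_zero_iff hg hQ halt hx hxT]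
    simp [hxT, and_assoc]

lemma stIdx_eq_len_iff :
    StIdx P l x = (l.length : EReal) ↔
      x ∉ P.S ∧ x ∈ P.T ∧ ∀ z ∈ P.E, z ∉ P.T → P.lt z x := by
  have hlen := glist_length_pos hg
  by_cases hxS : x ∈ P.S
  · rw [stIdx_eval_S hg hx hxS]
    exact iff_of_false (Ne.symm (EReal.natCast_ne_bot _)) (fun h => h.1 hxS)
  · rw [stIdx_eval_nS hg hx hxS]
    rw [ecast]
    have hcast : (((lo l x + 1 : ℕ) : EReal) = ((l.length : ℕ) : EReal)) ↔
        lo l x + 1 = l.length := by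
      constructor <;> intro h <;> exact_mod_cast h
    rw [hcast, show (lo l x + 1 = l.length) ↔ (lo l x = l.length - 1) by omega,
      lo_eq_last_iff hg hQ halt hx hxS]
    simp [hxS]

lemma teIdx_eq_len_iff :
    TeIdx P l x = (l.length : EReal) ↔ x ∉ P.T ∧ ∀ z ∈ P.E, ¬ P.lt x z := by
  have hlen := glist_length_pos hg
  by_cases hxT : x ∈ P.T
  · rw [teIdx_eval_T hg hx hxT]
    exact iff_of_false (Ne.symm (EReal.natCast_ne_top _)) (fun h => h.1 hxT)
  · rw [teIdx_eval_nT hg hx hxT]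
    rw [ecast]
    have hcast : (((hi l x + 1 : ℕ) : EReal) = ((l.length : ℕ) : EReal)) ↔
        hi l x + 1 = l.length := by
      constructor <;> intro h <;> exact_mod_cast h
    rw [hcast, show (hi l x + 1 = l.length) ↔ (hi l x = l.length - 1) by omega,
      hi_eq_last_iff hg hQ halt hx hxT]
    simp [hxT]

end Bridges

end Step13Aux
namespace Step13Aux

variable {Λ : Type}

/-- Disjunction. -/
def mOr (φ ψ : MSO Λ) : MSO Λ := .not (.and (.not φ) (.not ψ))

/-- Bounded universal quantification. -/
def mAll (k : ℕ) (φ : MSO Λ) : MSO Λ := .not (.exFO k (.not φ))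

/-- Biimplication. -/
def mIff (φ ψ : MSO Λ) : MSO Λ := mOr (.and φ ψ) (.and (.not φ) (.not ψ))

lemma sat_or {P : Ipomset Λ} {φ ψ : MSO Λ} {ν : ℕ → ℕ} {μ : ℕ → Set ℕ} :
    MSO.Sat P (mOr φ ψ) ν μ ↔ MSO.Sat P φ ν μ ∨ MSO.Sat P ψ ν μ := by
  simp only [mOr, MSO.Sat]; tauto

lemma sat_all {P : Ipomset Λ} {k : ℕ} {φ : MSO Λ} {ν : ℕ → ℕ} {μ : ℕ → Set ℕ} :
    MSO.Sat P (mAll k φ) ν μ ↔ ∀ e ∈ P.E, MSO.Sat P φ (Function.update ν k e) μ := by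
  simp only [mAll, MSO.Sat]; push_neg; rfl

lemma sat_iff {P : Ipomset Λ} {φ ψ : MSO Λ} {ν : ℕ → ℕ} {μ : ℕ → Set ℕ} :
    MSO.Sat P (mIff φ ψ) ν μ ↔ (MSO.Sat P φ ν μ ↔ MSO.Sat P ψ ν μ) := by
  simp only [mIff, sat_or, MSO.Sat]; tauto

lemma selIdx_true (P : Ipomset Λ) (l : List (Ipomset Λ)) (x : ℕ) :
    selIdx P l true x = StIdx P l x := by simp [selIdx]

lemma selIdx_false (P : Ipomset Λ) (l : List (Ipomset Λ)) (x : ℕ) :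
    selIdx P l false x = TeIdx P l x := by simp [selIdx]

end Step13Aux
/-- For `f, g ∈ {St, Te}` (encoded by a Boolean, `true = St`) and
`⋈ ∈ {=, <, >}`, the relation `f(x) ⋈ g(y)` on events of an interval ipomset (indices
taken in its sparse step decomposition) is MSO-definable, as are `f(x) = 1` (min) and
`f(x) = n` (max). -/
theorem st_te_comparisons_mso_definable {Λ : Type} [Fintype Λ] (f g : Bool)
    (bow : EReal → EReal → Prop)
    (hbow : bow = (· = ·) ∨ bow = (· < ·) ∨ bow = (· > ·)) :
    (∃ φ : MSO Λ, φ.fv1 ⊆ {0, 1} ∧ φ.fv2 = ∅ ∧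
      ∀ P : Ipomset Λ, P.Interval → ∀ l : List (Ipomset Λ), IsSparseDecomp l P →
        ∀ x ∈ P.E, ∀ y ∈ P.E,
          (MSO.Sat P φ (fun n => if n = 0 then x else y) (fun _ => ∅) ↔
            bow (selIdx P l f x) (selIdx P l g y))) ∧
    (∃ φmin : MSO Λ, φmin.fv1 ⊆ {0} ∧ φmin.fv2 = ∅ ∧
      ∀ P : Ipomset Λ, P.Interval → ∀ l : List (Ipomset Λ), IsSparseDecomp l P →
        ∀ x ∈ P.E,
          (MSO.Sat P φmin (fun _ => x) (fun _ => ∅) ↔ selIdx P l f x = 1)) ∧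
    (∃ φmax : MSO Λ, φmax.fv1 ⊆ {0} ∧ φmax.fv2 = ∅ ∧
      ∀ P : Ipomset Λ, P.Interval → ∀ l : List (Ipomset Λ), IsSparseDecomp l P →
        ∀ x ∈ P.E,
          (MSO.Sat P φmax (fun _ => x) (fun _ => ∅) ↔
            selIdx P l f x = (l.length : EReal))) := by
  classical
  open Step13Aux in
  refine ⟨?_, ?_, ?_⟩
  · -- comparison formulas
    rcases hbow with rfl | rfl | rfl
    · -- equality
      cases f <;> cases g
      · -- Te, Te
        refine ⟨mOr (.and (.tgt 0) (.tgt 1)) (.and (.not (.tgt 0)) (.and (.not (.tgt 1))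
          (mAll 2 (mIff (.lt 0 2) (.lt 1 2))))), by simp only [mOr, mAll, mIff, MSO.fv1] <;> decide, by simp only [mOr, mAll, mIff, MSO.fv2] <;> decide, ?_⟩
        intro P hP l hsd x hx y hy
        obtain ⟨⟨hne, hQ, hg⟩, halt⟩ := hsd
        simp only [selIdx_true, selIdx_false]
        rw [teIdx_eq_teIdx_iff hg hQ halt hx hy]
        simp only [sat_or, sat_all, sat_iff, MSO.Sat, Function.update_apply]
        simp only [show (0:ℕ) ≠ 2 from by decide, show (1:ℕ) ≠ 2 from by decide,
          if_neg, if_pos, ite_true, ite_false]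
        simp
      · -- Te, St : never equal
        refine ⟨.lt 0 0, by simp only [mOr, mAll, mIff, MSO.fv1] <;> decide, by simp only [mOr, mAll, mIff, MSO.fv2] <;> decide, ?_⟩
        intro P hP l hsd x hx y hy
        obtain ⟨⟨hne, hQ, hg⟩, halt⟩ := hsd
        simp only [selIdx_true, selIdx_false]
        exact iff_of_false (fun h => P.lt_irrefl x (by simpa [MSO.Sat] using h))
          (fun h => stIdx_ne_teIdx hg hQ halt hy hx ((show TeIdx P l x = StIdx P l y from h)).symm)
      · -- St, Te : never equal
        refine ⟨.lt 0 0, by simp only [mOr, mAll, mIff, MSO.fv1] <;> decide, by simp only [mOr, mAll, mIff, MSO.fv2] <;> decide, ?_⟩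
        intro P hP l hsd x hx y hy
        obtain ⟨⟨hne, hQ, hg⟩, halt⟩ := hsd
        simp only [selIdx_true, selIdx_false]
        exact iff_of_false (fun h => P.lt_irrefl x (by simpa [MSO.Sat] using h))
          (fun h => stIdx_ne_teIdx hg hQ halt hx hy h)
      · -- St, St
        refine ⟨mOr (.and (.src 0) (.src 1)) (.and (.not (.src 0)) (.and (.not (.src 1))
          (mAll 2 (mIff (.lt 2 0) (.lt 2 1))))), by simp only [mOr, mAll, mIff, MSO.fv1] <;> decide, by simp only [mOr, mAll, mIff, MSO.fv2] <;> decide, ?_⟩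
        intro P hP l hsd x hx y hy
        obtain ⟨⟨hne, hQ, hg⟩, halt⟩ := hsd
        simp only [selIdx_true, selIdx_false]
        rw [stIdx_eq_stIdx_iff hg hQ halt hx hy]
        simp only [sat_or, sat_all, sat_iff, MSO.Sat, Function.update_apply]
        simp only [show (0:ℕ) ≠ 2 from by decide, show (1:ℕ) ≠ 2 from by decide,
          if_neg, if_pos, ite_true, ite_false]
        simp
    · -- strictly less
      cases f <;> cases g
      · -- Te < Te
        refine ⟨.and (.not (.tgt 0)) (mOr (.tgt 1) (.exFO 2 (.and (.lt 0 2)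
          (.not (.lt 1 2))))), by simp only [mOr, mAll, mIff, MSO.fv1] <;> decide, by simp only [mOr, mAll, mIff, MSO.fv2] <;> decide, ?_⟩
        intro P hP l hsd x hx y hy
        obtain ⟨⟨hne, hQ, hg⟩, halt⟩ := hsd
        simp only [selIdx_true, selIdx_false]
        rw [teIdx_lt_teIdx_iff hg hQ halt hx hy]
        simp [sat_or, sat_all, MSO.Sat, Function.update_apply]
      · -- Te < St
        refine ⟨.lt 0 1, by simp only [mOr, mAll, mIff, MSO.fv1] <;> decide, by simp only [mOr, mAll, mIff, MSO.fv2] <;> decide, ?_⟩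
        intro P hP l hsd x hx y hy
        obtain ⟨⟨hne, hQ, hg⟩, halt⟩ := hsd
        simp only [selIdx_true, selIdx_false]
        rw [teIdx_lt_stIdx_iff hg hQ halt hx hy]
        simp [MSO.Sat]
      · -- St < Te
        refine ⟨.not (.lt 1 0), by simp only [mOr, mAll, mIff, MSO.fv1] <;> decide, by simp only [mOr, mAll, mIff, MSO.fv2] <;> decide, ?_⟩
        intro P hP l hsd x hx y hy
        obtain ⟨⟨hne, hQ, hg⟩, halt⟩ := hsd
        simp only [selIdx_true, selIdx_false]
        rw [stIdx_lt_teIdx_iff hg hQ halt hx hy]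
        simp [MSO.Sat]
      · -- St < St
        refine ⟨.and (.not (.src 1)) (mOr (.src 0) (.exFO 2 (.and (.lt 2 1)
          (.not (.lt 2 0))))), by simp only [mOr, mAll, mIff, MSO.fv1] <;> decide, by simp only [mOr, mAll, mIff, MSO.fv2] <;> decide, ?_⟩
        intro P hP l hsd x hx y hy
        obtain ⟨⟨hne, hQ, hg⟩, halt⟩ := hsd
        simp only [selIdx_true, selIdx_false]
        rw [stIdx_lt_stIdx_iff hg hQ halt hx hy]
        simp [sat_or, sat_all, MSO.Sat, Function.update_apply]
    · -- strictly greater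
      cases f <;> cases g
      · -- Te > Te
        refine ⟨.and (.not (.tgt 1)) (mOr (.tgt 0) (.exFO 2 (.and (.lt 1 2)
          (.not (.lt 0 2))))), by simp only [mOr, mAll, mIff, MSO.fv1] <;> decide, by simp only [mOr, mAll, mIff, MSO.fv2] <;> decide, ?_⟩
        intro P hP l hsd x hx y hy
        obtain ⟨⟨hne, hQ, hg⟩, halt⟩ := hsd
        simp only [selIdx_true, selIdx_false]
        rw [gt_iff_lt, teIdx_lt_teIdx_iff hg hQ halt hy hx]
        simp [sat_or, sat_all, MSO.Sat, Function.update_apply]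
      · -- Te > St
        refine ⟨.not (.lt 0 1), by simp only [mOr, mAll, mIff, MSO.fv1] <;> decide, by simp only [mOr, mAll, mIff, MSO.fv2] <;> decide, ?_⟩
        intro P hP l hsd x hx y hy
        obtain ⟨⟨hne, hQ, hg⟩, halt⟩ := hsd
        simp only [selIdx_true, selIdx_false]
        rw [gt_iff_lt, stIdx_lt_teIdx_iff hg hQ halt hy hx]
        simp [MSO.Sat]
      · -- St > Te
        refine ⟨.lt 1 0, by simp only [mOr, mAll, mIff, MSO.fv1] <;> decide, by simp only [mOr, mAll, mIff, MSO.fv2] <;> decide, ?_⟩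
        intro P hP l hsd x hx y hy
        obtain ⟨⟨hne, hQ, hg⟩, halt⟩ := hsd
        simp only [selIdx_true, selIdx_false]
        rw [gt_iff_lt, teIdx_lt_stIdx_iff hg hQ halt hy hx]
        simp [MSO.Sat]
      · -- St > St
        refine ⟨.and (.not (.src 0)) (mOr (.src 1) (.exFO 2 (.and (.lt 2 0)
          (.not (.lt 2 1))))), by simp only [mOr, mAll, mIff, MSO.fv1] <;> decide, by simp only [mOr, mAll, mIff, MSO.fv2] <;> decide, ?_⟩
        intro P hP l hsd x hx y hy
        obtain ⟨⟨hne, hQ, hg⟩, halt⟩ := hsd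
        simp only [selIdx_true, selIdx_false]
        rw [gt_iff_lt, stIdx_lt_stIdx_iff hg hQ halt hy hx]
        simp [sat_or, sat_all, MSO.Sat, Function.update_apply]
  · -- minimum
    cases f
    · -- Te(x) = 1
      refine ⟨.and (.src 0) (.and (.not (.tgt 0)) (mAll 2 (mOr (.src 2) (.lt 0 2)))),
        by simp only [mOr, mAll, mIff, MSO.fv1] <;> decide, by simp only [mOr, mAll, mIff, MSO.fv2] <;> decide, ?_⟩
      intro P hP l hsd x hx
      obtain ⟨⟨hne, hQ, hg⟩, halt⟩ := hsd
      simp only [selIdx_true, selIdx_false]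
      rw [teIdx_eq_one_iff hg hQ halt hx hx]
      simp [sat_or, sat_all, MSO.Sat, Function.update_apply]
      intro _ _; exact forall₂_congr fun z _ => or_iff_not_imp_left
    · -- St(x) = 1
      refine ⟨.and (.not (.src 0)) (mAll 2 (.not (.lt 2 0))), by simp only [mOr, mAll, mIff, MSO.fv1] <;> decide, by simp only [mOr, mAll, mIff, MSO.fv2] <;> decide, ?_⟩
      intro P hP l hsd x hx
      obtain ⟨⟨hne, hQ, hg⟩, halt⟩ := hsd
      simp only [selIdx_true, selIdx_false]
      rw [stIdx_eq_one_iff hg hQ halt hx hx]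
      simp [sat_all, MSO.Sat, Function.update_apply]
  · -- maximum
    cases f
    · -- Te(x) = n
      refine ⟨.and (.not (.tgt 0)) (mAll 2 (.not (.lt 0 2))), by simp only [mOr, mAll, mIff, MSO.fv1] <;> decide, by simp only [mOr, mAll, mIff, MSO.fv2] <;> decide, ?_⟩
      intro P hP l hsd x hx
      obtain ⟨⟨hne, hQ, hg⟩, halt⟩ := hsd
      simp only [selIdx_true, selIdx_false]
      rw [teIdx_eq_len_iff hg hQ halt hx hx]
      simp [sat_all, MSO.Sat, Function.update_apply]
    · -- St(x) = n
      refine ⟨.and (.not (.src 0)) (.and (.tgt 0) (mAll 2 (mOr (.tgt 2) (.lt 2 0)))),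
        by simp only [mOr, mAll, mIff, MSO.fv1] <;> decide, by simp only [mOr, mAll, mIff, MSO.fv2] <;> decide, ?_⟩
      intro P hP l hsd x hx
      obtain ⟨⟨hne, hQ, hg⟩, halt⟩ := hsd
      simp only [selIdx_true, selIdx_false]
      rw [stIdx_eq_len_iff hg hQ halt hx hx]
      simp [sat_or, sat_all, MSO.Sat, Function.update_apply]
      intro _ _; exact forall₂_congr fun z _ => or_iff_not_imp_left
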